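/- The coefficients μ^{(1)}_n satisfy: μ^{(1)}_0 = 1 and, for every n ≥ 1, (Qq)^{−1}·[ν+1]_q·[ν+n+1]_q·μ^{(1)}_n = ∑_{k=0}^{n−1} q^{k} μ^{(1)}_{k} μ^{(1)}_{n−1−k} in K. -/

import Mathlib

/- Let `K` be the fraction field of `ℚ[q,Q]`, where `Q` plays the role of `q^ν`.
`θ1ν` and `θ1ν1` are the series `θ^{(1)}_ν` and `θ^{(1)}_{ν+1}` of Jackson's
`q`-Bessel function `J^{(1)}_ν`, and `μ1 n` are the coefficients of
`θ^{(1)}_{ν+1}/θ^{(1)}_ν`. -/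

noncomputable section

abbrev K : Type := FractionRing (MvPolynomial (Fin 2) ℚ)

def qv : K := algebraMap (MvPolynomial (Fin 2) ℚ) K (MvPolynomial.X 0)

def Qv : K := algebraMap (MvPolynomial (Fin 2) ℚ) K (MvPolynomial.X 1)

/-- The q-Pochhammer symbol `(a;q)_n`. -/
def qPoch (a : K) (n : ℕ) : K := ∏ j ∈ Finset.range n, (1 - a * qv ^ j)

/-- `[ν+k]_q = (1 - Q q^k)/(1-q)`. -/
def brk (k : ℕ) : K := (1 - Qv * qv ^ k) / (1 - qv)

/-- `[ν]_q = (1 - Q)/(1-q)`. -/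
def brNu : K := (1 - Qv) / (1 - qv)

/-- `θ^{(1)}_ν(x)`. -/
def θ1ν : PowerSeries K :=
  PowerSeries.mk fun n =>
    (-1) ^ n * (1 - qv) ^ (2 * n) / (qPoch qv n * qPoch (Qv * qv) n)

/-- `θ^{(1)}_{ν+1}(x)`. -/
def θ1ν1 : PowerSeries K :=
  PowerSeries.mk fun n =>
    (-1) ^ n * (1 - qv) ^ (2 * n) / (qPoch qv n * qPoch (Qv * qv ^ 2) n)

/-- The coefficients `μ^{(1)}_n` of `θ^{(1)}_{ν+1}(x)/θ^{(1)}_ν(x)`. -/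
def μ1 (n : ℕ) : K := PowerSeries.coeff (R := K) n (θ1ν1 * θ1ν⁻¹)

/-! ### Auxiliary lemmas -/

open PowerSeries

lemma algK_ne_zero {p : MvPolynomial (Fin 2) ℚ} (hp : p ≠ 0) :
    algebraMap (MvPolynomial (Fin 2) ℚ) K p ≠ 0 :=
  (map_ne_zero_iff _ (IsFractionRing.injective (MvPolynomial (Fin 2) ℚ) K)).mpr hp

lemma qv_ne_zero : qv ≠ 0 := algK_ne_zero (MvPolynomial.X_ne_zero 0)

lemma Qv_ne_zero : Qv ≠ 0 := algK_ne_zero (MvPolynomial.X_ne_zero 1)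

lemma one_sub_Qq_pow_ne (k : ℕ) : (1 : K) - Qv * qv ^ k ≠ 0 := by
  have h1 : (1 : K) - Qv * qv ^ k
      = algebraMap (MvPolynomial (Fin 2) ℚ) K
          (1 - MvPolynomial.X 1 * MvPolynomial.X 0 ^ k) := by
    simp [qv, Qv]
  rw [h1]
  apply algK_ne_zero
  intro h
  have := congrArg (MvPolynomial.eval (fun _ => (0:ℚ))) h
  simp at this

lemma one_sub_q_pow_ne (k : ℕ) : (1 : K) - qv ^ (k+1) ≠ 0 := by
  have h1 : (1 : K) - qv ^ (k+1)
      = algebraMap (MvPolynomial (Fin 2) ℚ) K (1 - MvPolynomial.X 0 ^ (k+1)) := by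
    simp [qv]
  rw [h1]
  apply algK_ne_zero
  intro h
  have := congrArg (MvPolynomial.eval (fun _ => (0:ℚ))) h
  simp at this

lemma one_sub_qv_ne : (1 : K) - qv ≠ 0 := by simpa using one_sub_q_pow_ne 0

lemma qPoch_qv_ne (n : ℕ) : qPoch qv n ≠ 0 := by
  unfold qPoch
  rw [Finset.prod_ne_zero_iff]
  intro j _
  have h : (1:K) - qv * qv ^ j = 1 - qv ^ (j+1) := by ring
  rw [h]; exact one_sub_q_pow_ne j

lemma qPoch_Qq_ne (n : ℕ) : qPoch (Qv * qv) n ≠ 0 := by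
  unfold qPoch
  rw [Finset.prod_ne_zero_iff]
  intro j _
  have h : (1:K) - Qv * qv * qv ^ j = 1 - Qv * qv ^ (j+1) := by ring
  rw [h]; exact one_sub_Qq_pow_ne (j+1)

lemma qPoch_Qq2_ne (n : ℕ) : qPoch (Qv * qv ^ 2) n ≠ 0 := by
  unfold qPoch
  rw [Finset.prod_ne_zero_iff]
  intro j _
  have h : (1:K) - Qv * qv ^ 2 * qv ^ j = 1 - Qv * qv ^ (j+2) := by ring
  rw [h]; exact one_sub_Qq_pow_ne (j+2)

lemma qPoch_succ (a : K) (n : ℕ) : qPoch a (n+1) = qPoch a n * (1 - a * qv ^ n) :=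
  Finset.prod_range_succ _ _

lemma qPoch_succ' (a : K) (n : ℕ) : qPoch a (n+1) = (1 - a) * qPoch (a * qv) n := by
  unfold qPoch
  rw [Finset.prod_range_succ', mul_comm]
  congr 1
  · simp
  · exact Finset.prod_congr rfl fun j _ => by ring

lemma pochAB (n : ℕ) :
    qPoch (Qv * qv) n * (1 - Qv * qv ^ (n+1)) = (1 - Qv * qv) * qPoch (Qv * qv ^ 2) n := by
  have h1 := qPoch_succ (Qv * qv) n
  have h2 := qPoch_succ' (Qv * qv) n
  have e : Qv * qv * qv = Qv * qv ^ 2 := by ring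
  rw [e] at h2
  calc qPoch (Qv * qv) n * (1 - Qv * qv ^ (n+1))
      = qPoch (Qv * qv) n * (1 - Qv * qv * qv ^ n) := by rw [pow_succ]; ring
    _ = qPoch (Qv * qv) (n+1) := h1.symm
    _ = (1 - Qv * qv) * qPoch (Qv * qv ^ 2) n := h2

/-- Contiguous relation: `θ_{ν+1}(x) - Qq θ_{ν+1}(qx) = (1 - Qq) θ_ν(x)`. -/
lemma D2 : θ1ν1 - PowerSeries.C (R := K) (Qv * qv) * PowerSeries.rescale qv θ1ν1
    = PowerSeries.C (R := K) (1 - Qv * qv) * θ1ν := by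
  ext n
  rw [map_sub, coeff_C_mul, coeff_C_mul, coeff_rescale]
  simp only [θ1ν, θ1ν1, coeff_mk]
  have hP := qPoch_qv_ne n
  have hA := qPoch_Qq_ne n
  have hB := qPoch_Qq2_ne n
  have key := pochAB n
  generalize qPoch qv n = P at *
  generalize qPoch (Qv * qv) n = A at *
  generalize qPoch (Qv * qv ^ 2) n = B at *
  field_simp
  linear_combination (1 - qv)^(2*n) * key

/-- `q`-derivative relation: `θ_ν(x) - θ_ν(qx) = -(1-q)²/(1-Qq) · x θ_{ν+1}(x)`. -/
lemma D1 : θ1ν - PowerSeries.rescale qv θ1ν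
    = PowerSeries.C (R := K) (-(1 - qv)^2 / (1 - Qv * qv)) * (PowerSeries.X * θ1ν1) := by
  ext n
  rw [map_sub, coeff_C_mul]
  cases n with
  | zero =>
      simp [θ1ν, coeff_rescale]
  | succ m =>
      rw [coeff_succ_X_mul, coeff_rescale]
      simp only [θ1ν, θ1ν1, coeff_mk]
      have hP := qPoch_qv_ne (m+1)
      have hA := qPoch_Qq_ne (m+1)
      have hPm := qPoch_qv_ne m
      have hBm := qPoch_Qq2_ne m
      have h1q := one_sub_q_pow_ne m
      have h1Qq := one_sub_Qq_pow_ne 1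
      have eP : qPoch qv (m+1) = qPoch qv m * (1 - qv ^ (m+1)) := by
        rw [qPoch_succ]; ring_nf
      have eA : qPoch (Qv * qv) (m+1) = (1 - Qv * qv) * qPoch (Qv * qv ^ 2) m := by
        rw [qPoch_succ']; ring_nf
      rw [eP, eA]
      have h1Qq' : (1:K) - Qv * qv ≠ 0 := by simpa using one_sub_Qq_pow_ne 1
      field_simp
      ring

lemma const_v : PowerSeries.constantCoeff (R := K) θ1ν = 1 := by
  rw [← PowerSeries.coeff_zero_eq_constantCoeff]
  simp [θ1ν, qPoch]

lemma hv : θ1ν * θ1ν⁻¹ = 1 :=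
  PowerSeries.mul_inv_cancel _ (by rw [const_v]; exact one_ne_zero)

/-- Proposition 3.3: the recurrence for the coefficients `μ^{(1)}_n`. -/
theorem mu1_recurrence :
    μ1 0 = 1 ∧
      ∀ n : ℕ, 1 ≤ n →
        (Qv * qv)⁻¹ * brk 1 * brk (n + 1) * μ1 n
          = ∑ k ∈ Finset.range n, qv ^ k * μ1 k * μ1 (n - 1 - k) := by
  set g : PowerSeries K := θ1ν1 * θ1ν⁻¹ with hg
  set v : PowerSeries K := θ1ν with hvdef
  set u : PowerSeries K := θ1ν1 with hudef
  set vq : PowerSeries K := PowerSeries.rescale qv θ1ν with hvq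
  set uq : PowerSeries K := PowerSeries.rescale qv θ1ν1 with huq
  set gq : PowerSeries K := PowerSeries.rescale qv g with hgq
  set c1 : K := (1 - qv)^2 / (1 - Qv * qv) with hc1
  have hμ : ∀ k, μ1 k = PowerSeries.coeff (R := K) k g := fun k => rfl
  have hgv : g * v = u := by
    rw [hg, hvdef, hudef, mul_assoc, mul_comm θ1ν⁻¹ θ1ν, hv, mul_one]
  have hgqvq : gq * vq = uq := by
    rw [hgq, hvq, huq, ← map_mul]; exact congrArg _ hgv
  have hD1 : v - vq = PowerSeries.C (R := K) (-c1) * (PowerSeries.X * u) := by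
    rw [hc1, ← neg_div]; exact D1
  have hD2 : u - PowerSeries.C (R := K) (Qv * qv) * uq = PowerSeries.C (R := K) (1 - Qv * qv) * v := D2
  have hconstv : PowerSeries.constantCoeff (R := K) v = 1 := const_v
  have hconstu : PowerSeries.constantCoeff (R := K) u = 1 := by
    rw [hudef, ← PowerSeries.coeff_zero_eq_constantCoeff]; simp [θ1ν1, qPoch]
  have hconstvq : PowerSeries.coeff (R := K) 0 vq = 1 := by
    rw [hvq, coeff_rescale, pow_zero, one_mul,
      PowerSeries.coeff_zero_eq_constantCoeff_apply, const_v]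
  have hμ0 : μ1 0 = 1 := by
    rw [hμ 0, PowerSeries.coeff_zero_eq_constantCoeff_apply, hg, map_mul,
      PowerSeries.constantCoeff_inv, const_v]
    have : PowerSeries.constantCoeff (R := K) θ1ν1 = 1 := hconstu
    rw [this]; norm_num
  have hgqc : ∀ k, PowerSeries.coeff (R := K) k gq = qv ^ k * μ1 k := by
    intro k; rw [hgq, coeff_rescale, hμ]
  clear_value g v u vq uq gq c1
  clear hg hvdef hudef hvq huq hgq
  have star : u * vq - PowerSeries.C (R := K) (Qv * qv) * (uq * v)
      = PowerSeries.C (R := K) (1 - Qv * qv) * (v * vq)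
        + PowerSeries.C (R := K) (Qv * qv) * PowerSeries.C (R := K) c1 * (PowerSeries.X * (u * uq)) := by
    have hCneg : PowerSeries.C (R := K) (-c1) = - PowerSeries.C (R := K) c1 := by rw [map_neg]
    rw [hCneg] at hD1
    linear_combination vq * hD2 - PowerSeries.C (R := K) (Qv * qv) * uq * hD1
  have hv_ne : v ≠ 0 := by
    intro h; rw [h] at hconstv; simp at hconstv
  have hvq_ne : vq ≠ 0 := by
    intro h; rw [h] at hconstvq; simp at hconstvq
  have hne : v * vq ≠ 0 := mul_ne_zero hv_ne hvq_ne
  have hG : g - PowerSeries.C (R := K) (Qv * qv) * gq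
      = PowerSeries.C (R := K) (1 - Qv * qv)
        + PowerSeries.C (R := K) (Qv * qv) * PowerSeries.C (R := K) c1 * (PowerSeries.X * (g * gq)) := by
    apply mul_right_cancel₀ hne
    linear_combination star + (vq - PowerSeries.C (R := K) (Qv * qv) * PowerSeries.C (R := K) c1
        * (PowerSeries.X * (gq * vq))) * hgv
      - (PowerSeries.C (R := K) (Qv * qv) * v
          + PowerSeries.C (R := K) (Qv * qv) * PowerSeries.C (R := K) c1 * (PowerSeries.X * u)) * hgqvq
  rw [← map_mul] at hG
  refine ⟨hμ0, ?_⟩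
  intro n hn
  obtain ⟨m, rfl⟩ : ∃ m, n = m + 1 := ⟨n - 1, by omega⟩
  have hcoeff := congrArg (PowerSeries.coeff (R := K) (m+1)) hG
  rw [map_sub, coeff_C_mul, map_add, PowerSeries.coeff_C, if_neg (Nat.succ_ne_zero m),
    coeff_C_mul, coeff_succ_X_mul, PowerSeries.coeff_mul,
    Finset.Nat.sum_antidiagonal_eq_sum_range_succ_mk] at hcoeff
  have hsum : ∑ k ∈ Finset.range (m+1),
        PowerSeries.coeff (R := K) (k, m - k).1 g * PowerSeries.coeff (R := K) (k, m - k).2 gq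
      = ∑ k ∈ Finset.range (m+1), qv ^ k * μ1 k * μ1 ((m+1) - 1 - k) := by
    rw [← Finset.sum_range_reflect (fun k => qv ^ k * μ1 k * μ1 ((m+1) - 1 - k)) (m+1)]
    apply Finset.sum_congr rfl
    intro j hj
    have hj' : j ≤ m := Nat.lt_succ_iff.mp (Finset.mem_range.mp hj)
    simp only
    rw [hgqc, ← hμ]
    have e1 : m + 1 - 1 - j = m - j := by omega
    have e2 : m + 1 - 1 - (m - j) = j := by omega
    rw [e1, e2]
    ring
  rw [show m.succ = m + 1 from rfl, hsum, ← hμ, hgqc] at hcoeff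
  have hQvqv : Qv * qv ≠ 0 := mul_ne_zero Qv_ne_zero qv_ne_zero
  have h1q : (1 : K) - qv ≠ 0 := one_sub_qv_ne
  have h1Qq : (1 : K) - Qv * qv ≠ 0 := by
    have := one_sub_Qq_pow_ne 1; rwa [pow_one] at this
  rw [hc1] at hcoeff
  rw [brk, brk, pow_one]
  have hQ0 := Qv_ne_zero
  have hq0 := qv_ne_zero
  field_simp at hcoeff ⊢
  linear_combination hcoeff

end
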